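/- Let K be a field and let V and W be K-vector spaces, each of countably infinite dimension, equipped with a bilinear form β : V × W → K that is nondegenerate in both variables (β(v, ·) = 0 implies v = 0, and β(·, w) = 0 implies w = 0). Then there exist a basis (v_i)_{i∈ℕ} of V and a basis (w_j)_{j∈ℕ} of W that are dual to each other: β(v_i, w_j) = 1 if i = j and β(v_i, w_j) = 0 if i ≠ j. -/

import Mathlib

open Submodule Set
section MackeyAux
variable {K V W : Type*} [Field K] [AddCommGroup V] [Module K V] [AddCommGroup W] [Module K W]

lemma mackey_range_snoc {α : Type*} {n : ℕ} (f : Fin n → α) (a : α) :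
    Set.range (Fin.snoc f a) = insert a (Set.range f) := by
  ext x
  simp only [Set.mem_range, Set.mem_insert_iff]
  constructor
  · rintro ⟨i, rfl⟩
    induction i using Fin.lastCases with
    | last => left; simp
    | cast i => right; exact ⟨i, by simp⟩
  · rintro (rfl | ⟨i, rfl⟩)
    · exact ⟨Fin.last n, by simp⟩
    · exact ⟨i.castSucc, by simp⟩

lemma mackey_not_span (b : Module.Basis ℕ K V) {n : ℕ} (v : Fin n → V) :
    ∃ z : V, z ∉ Submodule.span K (Set.range v) := by
  by_contra h
  push_neg at h
  have htop : Submodule.span K (Set.range v) = ⊤ := eq_top_iff.mpr fun z _ => h z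
  have hfin : FiniteDimensional K V := by
    have := FiniteDimensional.span_of_finite K (Set.finite_range v)
    exact Module.Finite.of_surjective (Submodule.subtype _)
      (fun x => ⟨⟨x, htop ▸ Submodule.mem_top⟩, rfl⟩)
  have : Fintype ℕ := FiniteDimensional.fintypeBasisIndex b
  exact not_finite ℕ

lemma mackey_step {n : ℕ} (β : V →ₗ[K] W →ₗ[K] K)
    (hndV : ∀ v : V, (∀ w : W, β v w = 0) → v = 0)
    (v : Fin n → V) (w : Fin n → W)
    (hd : ∀ i j, β (v i) (w j) = if i = j then (1:K) else 0)
    (x : V) (hx : x ∉ Submodule.span K (Set.range v)) :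
    ∃ (a : V) (b : W), (∀ j, β a (w j) = 0) ∧ (∀ i, β (v i) b = 0) ∧ β a b = 1 ∧
      x ∈ Submodule.span K (insert a (Set.range v)) := by
  set a' : V := x - ∑ j, β x (w j) • v j with ha'
  have ha'w : ∀ j, β a' (w j) = 0 := by
    intro j
    simp only [ha', map_sub, map_sum, map_smul, LinearMap.sub_apply, LinearMap.sum_apply,
      LinearMap.smul_apply, smul_eq_mul, hd]
    simp [mul_ite, Finset.sum_ite_eq, Finset.sum_ite_eq']
  have hsum : (∑ j, β x (w j) • v j) ∈ Submodule.span K (Set.range v) :=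
    Submodule.sum_mem _ fun j _ => Submodule.smul_mem _ _ (Submodule.subset_span ⟨j, rfl⟩)
  have ha'0 : a' ≠ 0 := by
    intro h0
    exact hx (by rw [show x = ∑ j, β x (w j) • v j from by
      have := sub_eq_zero.mp h0; exact this]; exact hsum)
  obtain ⟨b0, hb0⟩ : ∃ b0, β a' b0 ≠ 0 := by
    by_contra h
    push_neg at h
    exact ha'0 (hndV a' h)
  set b' : W := b0 - ∑ i, β (v i) b0 • w i with hb'
  have hvb' : ∀ i, β (v i) b' = 0 := by
    intro i
    simp only [hb', map_sub, map_sum, map_smul, smul_eq_mul, hd]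
    simp [mul_ite, Finset.sum_ite_eq, Finset.sum_ite_eq']
  have hc : β a' b' = β a' b0 := by
    simp [hb', map_sub, map_sum, map_smul, smul_eq_mul, ha'w]
  set c : K := β a' b0 with hcdef
  refine ⟨c⁻¹ • a', b', ?_, hvb', ?_, ?_⟩
  · intro j; simp [ha'w j]
  · simp only [map_smul, LinearMap.smul_apply, smul_eq_mul, hc]
    exact inv_mul_cancel₀ hb0
  · have hca : c • (c⁻¹ • a') = a' := by
      rw [smul_smul, mul_inv_cancel₀ hb0, one_smul]
    have hxx : x = c • (c⁻¹ • a') + ∑ j, β x (w j) • v j := by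
      rw [hca, ha']; abel
    rw [hxx]
    exact Submodule.add_mem _
      (Submodule.smul_mem _ _ (Submodule.subset_span (Set.mem_insert _ _)))
      (Submodule.span_mono (Set.subset_insert _ _) hsum)

lemma mackey_stepV {n : ℕ} (β : V →ₗ[K] W →ₗ[K] K)
    (hndV : ∀ v : V, (∀ w : W, β v w = 0) → v = 0) (bV : Module.Basis ℕ K V)
    (v : Fin n → V) (w : Fin n → W)
    (hd : ∀ i j, β (v i) (w j) = if i = j then (1:K) else 0) (x : V) :
    ∃ (a : V) (b : W), (∀ j, β a (w j) = 0) ∧ (∀ i, β (v i) b = 0) ∧ β a b = 1 ∧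
      x ∈ Submodule.span K (insert a (Set.range v)) := by
  by_cases hx : x ∈ Submodule.span K (Set.range v)
  · obtain ⟨z, hz⟩ := mackey_not_span bV v
    obtain ⟨a, b, h1, h2, h3, _⟩ := mackey_step β hndV v w hd z hz
    exact ⟨a, b, h1, h2, h3, Submodule.span_mono (Set.subset_insert _ _) hx⟩
  · exact mackey_step β hndV v w hd x hx

lemma mackey_stepW {n : ℕ} (β : V →ₗ[K] W →ₗ[K] K)
    (hndW : ∀ w : W, (∀ v : V, β v w = 0) → w = 0) (bW : Module.Basis ℕ K W)
    (v : Fin n → V) (w : Fin n → W)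
    (hd : ∀ i j, β (v i) (w j) = if i = j then (1:K) else 0) (y : W) :
    ∃ (a : V) (b : W), (∀ j, β a (w j) = 0) ∧ (∀ i, β (v i) b = 0) ∧ β a b = 1 ∧
      y ∈ Submodule.span K (insert b (Set.range w)) := by
  have hd' : ∀ i j, β.flip (w i) (v j) = if i = j then (1:K) else 0 := by
    intro i j
    rw [LinearMap.flip_apply, hd]
    simp [eq_comm]
  obtain ⟨b, a, h1, h2, h3, h4⟩ :=
    mackey_stepV β.flip (fun y hy => hndW y hy) bW w v hd' y
  exact ⟨a, b, fun j => h2 j, fun i => h1 i, h3, h4⟩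


def MInv (β : V →ₗ[K] W →ₗ[K] K) (bV : Module.Basis ℕ K V) (bW : Module.Basis ℕ K W)
    (n : ℕ) (p : Fin n → V × W) : Prop :=
  (∀ i j, β (p i).1 (p j).2 = if i = j then (1:K) else 0) ∧
    (∀ k, 2*k < n → bV k ∈ Submodule.span K (Set.range fun i => (p i).1)) ∧
    (∀ k, 2*k+1 < n → bW k ∈ Submodule.span K (Set.range fun i => (p i).2))

lemma mackey_extend (β : V →ₗ[K] W →ₗ[K] K)
    (hndV : ∀ v : V, (∀ w : W, β v w = 0) → v = 0)
    (hndW : ∀ w : W, (∀ v : V, β v w = 0) → w = 0)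
    (bV : Module.Basis ℕ K V) (bW : Module.Basis ℕ K W) (n : ℕ) (p : Fin n → V × W)
    (hp : MInv β bV bW n p) :
    ∃ q : Fin (n+1) → V × W, MInv β bV bW (n+1) q ∧ ∀ i : Fin n, q i.castSucc = p i := by
  obtain ⟨hd, hcV, hcW⟩ := hp
  set v : Fin n → V := fun i => (p i).1 with hv
  set w : Fin n → W := fun i => (p i).2 with hw
  have key : ∀ a b, (∀ j, β a (w j) = 0) → (∀ i, β (v i) b = 0) → β a b = 1 →
      (∀ i j : Fin (n+1), β ((Fin.snoc p (a,b) : Fin (n+1) → V × W) i).1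
        ((Fin.snoc p (a,b) : Fin (n+1) → V × W) j).2 = if i = j then (1:K) else 0) := by
    intro a b haw hvb hab i j
    induction i using Fin.lastCases with
    | last =>
      induction j using Fin.lastCases with
      | last => simpa using hab
      | cast j => simpa [Fin.ne_of_gt (Fin.castSucc_lt_last j)] using haw j
    | cast i =>
      induction j using Fin.lastCases with
      | last => simpa [Fin.ne_of_lt (Fin.castSucc_lt_last i)] using hvb i
      | cast j => simpa [Fin.castSucc_inj] using hd i j
  have fst_snoc : ∀ (a : V) (b : W),
      (fun i : Fin (n+1) => ((Fin.snoc p (a,b) : Fin (n+1) → V × W) i).1)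
        = Fin.snoc v a := by
    intro a b
    funext i
    induction i using Fin.lastCases with
    | last => simp
    | cast i => simp [hv]
  have snd_snoc : ∀ (a : V) (b : W),
      (fun i : Fin (n+1) => ((Fin.snoc p (a,b) : Fin (n+1) → V × W) i).2)
        = Fin.snoc w b := by
    intro a b
    funext i
    induction i using Fin.lastCases with
    | last => simp
    | cast i => simp [hw]
  rcases Nat.even_or_odd n with ⟨k, hk⟩ | ⟨k, hk⟩
  · -- even step: cover bV k
    obtain ⟨a, b, haw, hvb, hab, hmem⟩ := mackey_stepV β hndV bV v w hd (bV k)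
    refine ⟨Fin.snoc p (a,b), ⟨key a b haw hvb hab, ?_, ?_⟩, fun i => by simp⟩
    · intro k' hk'
      rw [fst_snoc, mackey_range_snoc]
      rcases lt_or_eq_of_le (Nat.lt_succ_iff.mp hk') with h | h
      · exact Submodule.span_mono (Set.subset_insert _ _) (hcV k' h)
      · have : k' = k := by omega
        subst this
        exact hmem
    · intro k' hk'
      rw [snd_snoc, mackey_range_snoc]
      have : 2*k'+1 < n := by omega
      exact Submodule.span_mono (Set.subset_insert _ _) (hcW k' this)
  · -- odd step: cover bW k
    obtain ⟨a, b, haw, hvb, hab, hmem⟩ := mackey_stepW β hndW bW v w hd (bW k)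
    refine ⟨Fin.snoc p (a,b), ⟨key a b haw hvb hab, ?_, ?_⟩, fun i => by simp⟩
    · intro k' hk'
      rw [fst_snoc, mackey_range_snoc]
      have : 2*k' < n := by omega
      exact Submodule.span_mono (Set.subset_insert _ _) (hcV k' this)
    · intro k' hk'
      rw [snd_snoc, mackey_range_snoc]
      rcases lt_or_eq_of_le (Nat.lt_succ_iff.mp hk') with h | h
      · exact Submodule.span_mono (Set.subset_insert _ _) (hcW k' h)
      · have : k' = k := by omega
        subst this
        exact hmem
noncomputable def mackeySeq (β : V →ₗ[K] W →ₗ[K] K)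
    (hndV : ∀ v : V, (∀ w : W, β v w = 0) → v = 0)
    (hndW : ∀ w : W, (∀ v : V, β v w = 0) → w = 0)
    (bV : Module.Basis ℕ K V) (bW : Module.Basis ℕ K W) :
    (n : ℕ) → {p : Fin n → V × W // MInv β bV bW n p}
  | 0 => ⟨Fin.elim0, fun i => i.elim0, fun k hk => by omega, fun k hk => by omega⟩
  | n+1 =>
    ⟨Classical.choose (mackey_extend β hndV hndW bV bW n
        (mackeySeq β hndV hndW bV bW n).1 (mackeySeq β hndV hndW bV bW n).2),
     (Classical.choose_spec (mackey_extend β hndV hndW bV bW n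
        (mackeySeq β hndV hndW bV bW n).1 (mackeySeq β hndV hndW bV bW n).2)).1⟩

lemma mackeySeq_compat (β : V →ₗ[K] W →ₗ[K] K)
    (hndV : ∀ v : V, (∀ w : W, β v w = 0) → v = 0)
    (hndW : ∀ w : W, (∀ v : V, β v w = 0) → w = 0)
    (bV : Module.Basis ℕ K V) (bW : Module.Basis ℕ K W) (n : ℕ) (i : Fin n) :
    (mackeySeq β hndV hndW bV bW (n+1)).1 i.castSucc
      = (mackeySeq β hndV hndW bV bW n).1 i :=
  (Classical.choose_spec (mackey_extend β hndV hndW bV bW n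
      (mackeySeq β hndV hndW bV bW n).1 (mackeySeq β hndV hndW bV bW n).2)).2 i

lemma mackeySeq_stable (β : V →ₗ[K] W →ₗ[K] K)
    (hndV : ∀ v : V, (∀ w : W, β v w = 0) → v = 0)
    (hndW : ∀ w : W, (∀ v : V, β v w = 0) → w = 0)
    (bV : Module.Basis ℕ K V) (bW : Module.Basis ℕ K W) :
    ∀ (n i : ℕ) (h : i < n),
      (mackeySeq β hndV hndW bV bW n).1 ⟨i, h⟩
        = (mackeySeq β hndV hndW bV bW (i+1)).1 (Fin.last i) := by
  intro n
  induction n with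
  | zero => intro i h; omega
  | succ n ih =>
    intro i h
    rcases Nat.lt_or_ge i n with hi | hi
    · have : (⟨i, h⟩ : Fin (n+1)) = (⟨i, hi⟩ : Fin n).castSucc := rfl
      rw [this, mackeySeq_compat, ih i hi]
    · have : i = n := by omega
      subst this
      rfl
end MackeyAux

theorem statement18 (K V W : Type*) [Field K]
    [AddCommGroup V] [Module K V] [AddCommGroup W] [Module K W]
    (hV : Nonempty (Module.Basis ℕ K V)) (hW : Nonempty (Module.Basis ℕ K W))
    (β : V →ₗ[K] W →ₗ[K] K)
    (hndV : ∀ v : V, (∀ w : W, β v w = 0) → v = 0)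
    (hndW : ∀ w : W, (∀ v : V, β v w = 0) → w = 0) :
    ∃ (bV : Module.Basis ℕ K V) (bW : Module.Basis ℕ K W),
      ∀ i j : ℕ, β (bV i) (bW j) = if i = j then (1 : K) else 0 := by
  obtain ⟨bV0⟩ := hV
  obtain ⟨bW0⟩ := hW
  set S := mackeySeq β hndV hndW bV0 bW0 with hS
  set vseq : ℕ → V := fun n => ((S (n+1)).1 (Fin.last n)).1 with hvseq
  set wseq : ℕ → W := fun n => ((S (n+1)).1 (Fin.last n)).2 with hwseq
  have hstab : ∀ (n i : ℕ) (h : i < n), (S n).1 ⟨i, h⟩ = (vseq i, wseq i) := by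
    intro n i h
    rw [hS, mackeySeq_stable β hndV hndW bV0 bW0 n i h]
  have hdual : ∀ i j : ℕ, β (vseq i) (wseq j) = if i = j then (1:K) else 0 := by
    intro i j
    have hi : i < max i j + 1 := by omega
    have hj : j < max i j + 1 := by omega
    have h1 := hstab (max i j + 1) i hi
    have h2 := hstab (max i j + 1) j hj
    have := (S (max i j + 1)).2.1 ⟨i, hi⟩ ⟨j, hj⟩
    rw [h1, h2] at this
    simpa [Fin.mk.injEq] using this
  -- spanning for V
  have hsubV : ∀ n : ℕ, (Set.range fun i : Fin n => ((S n).1 i).1) ⊆ Set.range vseq := by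
    rintro n _ ⟨i, rfl⟩
    refine ⟨i.1, ?_⟩
    exact (congrArg Prod.fst (hstab n i.1 i.2)).symm
  have hsubW : ∀ n : ℕ, (Set.range fun i : Fin n => ((S n).1 i).2) ⊆ Set.range wseq := by
    rintro n _ ⟨i, rfl⟩
    refine ⟨i.1, ?_⟩
    exact (congrArg Prod.snd (hstab n i.1 i.2)).symm
  have hspanV : ⊤ ≤ Submodule.span K (Set.range vseq) := by
    rw [← bV0.span_eq]
    refine Submodule.span_le.mpr ?_
    rintro _ ⟨k, rfl⟩
    have := (S (2*k+1)).2.2.1 k (by omega)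
    exact Submodule.span_mono (hsubV (2*k+1)) this
  have hspanW : ⊤ ≤ Submodule.span K (Set.range wseq) := by
    rw [← bW0.span_eq]
    refine Submodule.span_le.mpr ?_
    rintro _ ⟨k, rfl⟩
    have := (S (2*k+2)).2.2.2 k (by omega)
    exact Submodule.span_mono (hsubW (2*k+2)) this
  -- linear independence
  have hliV : LinearIndependent K vseq := by
    rw [linearIndependent_iff]
    intro l hl
    ext j
    have h0 : β.flip (wseq j) (Finsupp.linearCombination K vseq l) = 0 := by
      rw [hl]; simp
    rw [Finsupp.apply_linearCombination] at h0
    rw [Finsupp.linearCombination_apply, Finsupp.sum] at h0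
    simp only [Function.comp, LinearMap.flip_apply, smul_eq_mul, hdual, mul_ite, mul_one,
      mul_zero, Finset.sum_ite_eq', Finset.sum_ite_eq] at h0
    simp only [Finsupp.coe_zero, Pi.zero_apply]
    by_cases hj : j ∈ l.support
    · simpa [hj] using h0
    · exact Finsupp.notMem_support_iff.mp hj
  have hliW : LinearIndependent K wseq := by
    rw [linearIndependent_iff]
    intro l hl
    ext i
    have h0 : β (vseq i) (Finsupp.linearCombination K wseq l) = 0 := by
      rw [hl]; simp
    rw [Finsupp.apply_linearCombination] at h0
    rw [Finsupp.linearCombination_apply, Finsupp.sum] at h0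
    simp only [Function.comp, smul_eq_mul, hdual, mul_ite, mul_one, mul_zero,
      Finset.sum_ite_eq', Finset.sum_ite_eq] at h0
    simp only [Finsupp.coe_zero, Pi.zero_apply]
    by_cases hi : i ∈ l.support
    · simpa [hi] using h0
    · exact Finsupp.notMem_support_iff.mp hi
  refine ⟨Module.Basis.mk hliV hspanV, Module.Basis.mk hliW hspanW, ?_⟩
  intro i j
  rw [Module.Basis.mk_apply, Module.Basis.mk_apply]
  exact hdual i j
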